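/- Let g : ℝ^d → ℝ be C-Lipschitz and ρ-weakly convex, let b ∈ ℝ^d, and let v be a subgradient of g at b (with modulus ρ). Then for all a, z ∈ ℝ^d and every M > 0: g(a) − g(z) − ⟨v, a − z⟩ ≤ 8·C²/M + (M/8)·‖a − b‖² + (ρ/2)·‖z − b‖². -/

import Mathlib

open scoped RealInnerProductSpace BigOperators

/-- For `g` `C`-Lipschitz and `ρ`-weakly convex, and `v` a subgradient of `g` at
`b`, one has `g(a) − g(z) − ⟨v, a − z⟩ ≤ 8C²/M + (M/8)‖a − b‖² + (ρ/2)‖z − b‖²` for all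
`a, z` and every `M > 0`. -/
theorem stmt19 (d : ℕ) (g : EuclideanSpace ℝ (Fin d) → ℝ) (C ρ : ℝ)
    (hg_lip : ∀ x y : EuclideanSpace ℝ (Fin d), |g x - g y| ≤ C * ‖x - y‖)
    (hg_wc : ConvexOn ℝ Set.univ (fun x => g x + ρ / 2 * ‖x‖ ^ 2))
    (b v : EuclideanSpace ℝ (Fin d))
    (hv : ∀ z, g z ≥ g b + ⟪v, z - b⟫ - ρ / 2 * ‖z - b‖ ^ 2) :
    ∀ (a z : EuclideanSpace ℝ (Fin d)) (M : ℝ), 0 < M →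
      g a - g z - ⟪v, a - z⟫ ≤ 8 * C ^ 2 / M + M / 8 * ‖a - b‖ ^ 2 + ρ / 2 * ‖z - b‖ ^ 2 := by
  intro a z M hM
  have hC0 : ∀ x y : EuclideanSpace ℝ (Fin d), 0 ≤ C * ‖x - y‖ :=
    fun x y => le_trans (abs_nonneg _) (hg_lip x y)
  -- key: ‖v‖² ≤ C‖v‖
  have key : ‖v‖ ^ 2 - C * ‖v‖ ≤ 0 := by
    have hstep : ∀ t : ℝ, 0 < t → ‖v‖ ^ 2 - C * ‖v‖ ≤ ρ / 2 * t * ‖v‖ ^ 2 := by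
      intro t ht
      have h1 := hv (b + t • v)
      have h2 := (abs_le.mp (hg_lip (b + t • v) b)).2
      have e1 : b + t • v - b = t • v := by abel
      rw [e1, real_inner_smul_right, real_inner_self_eq_norm_sq] at h1
      have e4 : ‖t • v‖ = t * ‖v‖ := by
        rw [norm_smul, Real.norm_eq_abs, abs_of_pos ht]
      rw [e4] at h1
      rw [e1, e4] at h2
      have h3 : t * ‖v‖ ^ 2 ≤ C * (t * ‖v‖) + ρ / 2 * (t * ‖v‖) ^ 2 := by linarith
      have hmul : t * (‖v‖ ^ 2 - C * ‖v‖) ≤ t * (ρ / 2 * t * ‖v‖ ^ 2) := by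
        nlinarith [h3]
      exact (mul_le_mul_iff_right₀ ht).mp hmul
    by_contra h
    push_neg at h
    rcases le_or_gt (ρ / 2 * ‖v‖ ^ 2) 0 with hK | hK
    · linarith [hstep 1 one_pos]
    · have ht : (0:ℝ) < (‖v‖ ^ 2 - C * ‖v‖) / (2 * (ρ / 2 * ‖v‖ ^ 2)) := by positivity
      have h2' := hstep _ ht
      have hvne : ‖v‖ ≠ 0 := by intro h0; rw [h0] at hK; simp at hK
      have hρ : ρ ≠ 0 := by intro h0; rw [h0] at hK; simp at hK
      have hx : ρ / 2 * ((‖v‖ ^ 2 - C * ‖v‖) / (2 * (ρ / 2 * ‖v‖ ^ 2))) * ‖v‖ ^ 2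
          = (‖v‖ ^ 2 - C * ‖v‖) / 2 := by
        field_simp
      rw [hx] at h2'
      linarith
  have hvn : ‖v‖ * ‖a - b‖ ≤ C * ‖a - b‖ := by
    rcases eq_or_ne v 0 with hv0 | hv0
    · simpa [hv0] using hC0 a b
    · have hvpos : 0 < ‖v‖ := norm_pos_iff.mpr hv0
      have hvC : ‖v‖ ≤ C := by nlinarith [key, hvpos]
      exact mul_le_mul_of_nonneg_right hvC (norm_nonneg _)
  -- first bracket
  have h1 : g a - g b - ⟪v, a - b⟫ ≤ 2 * C * ‖a - b‖ := by
    have hl := (abs_le.mp (hg_lip a b)).2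
    have hin : -(‖v‖ * ‖a - b‖) ≤ ⟪v, a - b⟫ :=
      neg_le_of_abs_le (abs_real_inner_le_norm v (a - b))
    linarith
  -- second bracket
  have h2 : g b - g z + ⟪v, z - b⟫ ≤ ρ / 2 * ‖z - b‖ ^ 2 := by
    have := hv z; linarith
  have hsplit : ⟪v, a - z⟫ = ⟪v, a - b⟫ - ⟪v, z - b⟫ := by
    rw [inner_sub_right, inner_sub_right, inner_sub_right]; ring
  have hamgm : 2 * C * ‖a - b‖ ≤ 8 * C ^ 2 / M + M / 8 * ‖a - b‖ ^ 2 := by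
    rw [div_add' _ _ _ hM.ne', le_div_iff₀ hM]
    nlinarith [sq_nonneg (M * ‖a - b‖ - 8 * C)]
  rw [hsplit]
  linarith
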